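/- Fix an integer p ≥ 2. Let w be a list over the alphabet {2, 3, …, p} in which each symbol occurs exactly twice (so w has length 2(p−1)). Suppose that for all k, ℓ with 2 ≤ k < ℓ ≤ p, the sublist of w consisting of the occurrences of k and ℓ equals [k, ℓ, ℓ, k]. Then w equals the concatenation [2, 3, …, p] ++ [p, p−1, …, 3, 2]. -/

import Mathlib

private lemma count_one_split (q : ℕ) :
    ∀ w : List ℕ, w.count q = 1 → ∃ b c, w = b ++ q :: c ∧ q ∉ b ∧ q ∉ c := by
  intro w
  induction w with
  | nil => simp
  | cons x t ih =>
    by_cases hx : x = q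
    · subst hx
      intro h
      rw [List.count_cons_self] at h
      have ht : t.count x = 0 := by omega
      exact ⟨[], t, by simp, by simp, by rwa [← List.count_eq_zero]⟩
    · intro h
      rw [List.count_cons_of_ne (by exact fun hq => hx hq)] at h
      obtain ⟨b, c, rfl, hb, hc⟩ := ih h
      exact ⟨x :: b, c, by simp, by simp [hb, Ne.symm hx, hx], hc⟩

private lemma count_two_split (q : ℕ) :
    ∀ w : List ℕ, w.count q = 2 →
      ∃ a b c, w = a ++ q :: b ++ q :: c ∧ q ∉ a ∧ q ∉ b ∧ q ∉ c := by
  intro w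
  induction w with
  | nil => simp
  | cons x t ih =>
    by_cases hx : x = q
    · subst hx
      intro h
      rw [List.count_cons_self] at h
      obtain ⟨b, c, rfl, hb, hc⟩ := count_one_split x t (by omega)
      exact ⟨[], b, c, by simp, by simp, hb, hc⟩
    · intro h
      rw [List.count_cons_of_ne (by exact fun hq => hx hq)] at h
      obtain ⟨a, b, c, rfl, ha, hb, hc⟩ := ih h
      refine ⟨x :: a, b, c, by simp, ?_, hb, hc⟩
      intro h
      rcases List.mem_cons.mp h with h | h
      · exact hx h.symm
      · exact ha h

private lemma split4 {A B C : List ℕ} {k q : ℕ} (hk : k ≠ q) (hA : q ∉ A) (hB : q ∉ B)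
    (h : A ++ q :: (B ++ q :: C) = [k, q, q, k]) : A = [k] ∧ B = [] ∧ C = [k] := by
  match A with
  | [] => simp at h; omega
  | [x] =>
    simp at h
    obtain ⟨hx, h⟩ := h
    match B with
    | [] => simp_all
    | y :: B' => simp_all
  | x :: y :: A' =>
    simp at h
    obtain ⟨hx, hy, h⟩ := h
    exact absurd (by simp [hy]) hA

/-- Fix `p ≥ 2`.  If `w` is a list over the alphabet `{2, 3, …, p}` in which each symbol
occurs exactly twice, and for all `2 ≤ k < ℓ ≤ p` the sublist of `w` on the symbols `k, ℓ`
is `[k, ℓ, ℓ, k]`, then `w` is the rainbow word `[2, 3, …, p] ++ [p, p−1, …, 3, 2]`. -/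
theorem stmt14 (p : ℕ) (hp : 2 ≤ p) (w : List ℕ)
    (hmem : ∀ x ∈ w, 2 ≤ x ∧ x ≤ p)
    (hcount : ∀ s : ℕ, 2 ≤ s → s ≤ p → w.count s = 2)
    (hpat : ∀ k l : ℕ, 2 ≤ k → k < l → l ≤ p →
      w.filter (fun x => decide (x = k ∨ x = l)) = [k, l, l, k]) :
    w = ((List.range (p - 1)).map fun t => t + 2)
      ++ ((List.range (p - 1)).map fun t => p - t) := by
  induction p, hp using Nat.le_induction generalizing w with
  | base =>
    have hall : ∀ x ∈ w, x = 2 := fun x hx => le_antisymm (hmem x hx).2 (hmem x hx).1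
    have hlen : w.length = 2 := by
      have := hcount 2 le_rfl le_rfl
      rwa [List.count_eq_length.mpr (fun b hb => (hall b hb).symm)] at this
    have : w = List.replicate 2 2 := List.eq_replicate_iff.mpr ⟨hlen, hall⟩
    rw [this]
    decide
  | succ p hp ih =>
    set q : ℕ := p + 1 with hq
    obtain ⟨a, b, c, rfl, ha, hb, hc⟩ := count_two_split q w (hcount q (by omega) le_rfl)
    -- key per-symbol facts
    have key : ∀ k, 2 ≤ k → k ≤ p →
        a.filter (fun x => decide (x = k)) = [k] ∧
        b.filter (fun x => decide (x = k)) = [] ∧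
        c.filter (fun x => decide (x = k)) = [k] := by
      intro k hk2 hkp
      have hkq : k ≠ q := by omega
      have hfa : a.filter (fun x => decide (x = k ∨ x = q)) =
          a.filter (fun x => decide (x = k)) := by
        apply List.filter_congr
        intro x hx
        have : x ≠ q := fun h => ha (h ▸ hx)
        simp [this]
      have hfb : b.filter (fun x => decide (x = k ∨ x = q)) =
          b.filter (fun x => decide (x = k)) := by
        apply List.filter_congr
        intro x hx
        have : x ≠ q := fun h => hb (h ▸ hx)
        simp [this]
      have hfc : c.filter (fun x => decide (x = k ∨ x = q)) =
          c.filter (fun x => decide (x = k)) := by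
        apply List.filter_congr
        intro x hx
        have : x ≠ q := fun h => hc (h ▸ hx)
        simp [this]
      have h := hpat k q hk2 (by omega) le_rfl
      rw [List.filter_append, List.filter_cons_of_pos (by simp), List.filter_append,
        List.filter_cons_of_pos (by simp)] at h
      rw [hfa, hfb, hfc] at h
      have hA : q ∉ a.filter (fun x => decide (x = k)) :=
        fun hmm => ha (List.mem_of_mem_filter hmm)
      have hB : q ∉ b.filter (fun x => decide (x = k)) :=
        fun hmm => hb (List.mem_of_mem_filter hmm)
      exact split4 hkq hA hB (by simpa using h)
    -- membership facts
    have hmem' : ∀ x, x ∈ a ∨ x ∈ b ∨ x ∈ c → 2 ≤ x ∧ x ≤ p := by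
      intro x hx
      have hxw : x ∈ a ++ q :: b ++ q :: c := by
        rcases hx with h | h | h <;> simp [h]
      have hx1 := hmem x hxw
      have hxq : x ≠ q := by
        rintro rfl
        rcases hx with h | h | h
        · exact ha h
        · exact hb h
        · exact hc h
      omega
    -- b is empty
    have hbnil : b = [] := by
      rcases b with _ | ⟨x, b'⟩
      · rfl
      · exfalso
        have hx : x ∈ x :: b' := by simp
        have hxr := hmem' x (Or.inr (Or.inl hx))
        have := (key x hxr.1 hxr.2).2.1
        have : x ∈ List.filter (fun x_1 => decide (x_1 = x)) (x :: b') := by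
          simp
        rw [(key x hxr.1 hxr.2).2.1] at this
        simp at this
    subst hbnil
    -- counts in a
    have hcnta : ∀ k, 2 ≤ k → k ≤ p → a.count k = 1 := by
      intro k hk2 hkp
      have := (key k hk2 hkp).1
      have : (a.filter (fun x => decide (x = k))).length = 1 := by rw [this]; rfl
      rwa [List.count, List.countP_eq_length_filter,
        show (fun x => x == k) = (fun x => decide (x = k)) by funext x; by_cases hxk : x = k <;> simp [hxk]]
        at *
    have hcnta0 : ∀ k, ¬(2 ≤ k ∧ k ≤ p) → a.count k = 0 := by
      intro k hk
      rw [List.count_eq_zero]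
      intro hkmem
      exact hk (hmem' k (Or.inl hkmem))
    -- a is nodup with toFinset = Icc 2 p
    have hnda : a.Nodup := by
      rw [List.nodup_iff_count_le_one]
      intro x
      by_cases hx : 2 ≤ x ∧ x ≤ p
      · rw [hcnta x hx.1 hx.2]
      · rw [hcnta0 x hx]; omega
    have htf : a.toFinset = Finset.Icc 2 p := by
      ext x
      simp only [List.mem_toFinset, Finset.mem_Icc]
      constructor
      · intro hx; exact hmem' x (Or.inl hx)
      · intro hx
        have := hcnta x hx.1 hx.2
        exact List.count_pos_iff.mp (by omega)
    have hlena : a.length = p - 1 := by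
      have h1 := List.toFinset_card_of_nodup hnda
      rw [htf, Nat.card_Icc] at h1
      omega
    -- w' = a ++ c satisfies hypotheses for p
    have hac : a ++ c = ((List.range (p - 1)).map fun t => t + 2)
        ++ ((List.range (p - 1)).map fun t => p - t) := by
      apply ih
      · intro x hx
        rw [List.mem_append] at hx
        exact hmem' x (hx.imp id Or.inr)
      · intro s hs2 hsp
        have hw := hcount s hs2 (by omega)
        have hsq : s ≠ q := by omega
        simp [List.count_append, List.count_cons, hsq, Ne.symm hsq] at hw ⊢
        omega
      · intro k l hk2 hkl hlp
        have hw := hpat k l hk2 hkl (by omega)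
        have hqf : (decide (q = k ∨ q = l)) = false := by
          simp only [decide_eq_false_iff_not]
          push_neg
          omega
        simp only [List.filter_append, List.filter_cons, List.filter_nil, hqf,
          Bool.false_eq_true, if_false, List.nil_append, List.append_nil] at hw ⊢
        exact hw
    -- split the rainbow of p
    have hXlen : ((List.range (p - 1)).map fun t => t + 2).length = a.length := by
      simp [hlena]
    obtain ⟨haX, hcY⟩ := List.append_inj hac.symm hXlen
    -- now assemble
    obtain ⟨m, rfl⟩ : ∃ m, p = m + 2 := ⟨p - 2, by omega⟩
    have hm1 : m + 2 - 1 = m + 1 := by omega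
    rw [hm1] at haX hcY
    have h3 : m + 2 + 1 - 1 = m + 2 := by omega
    rw [h3, ← haX, ← hcY]
    have hX : (List.range (m + 2)).map (fun t => t + 2)
        = (List.range (m + 1)).map (fun t => t + 2) ++ [m + 3] := by
      rw [List.range_succ, List.map_append]
      simp
    have hY : (List.range (m + 2)).map (fun t => m + 2 + 1 - t)
        = (m + 3) :: (List.range (m + 1)).map (fun t => m + 2 - t) := by
      rw [List.range_succ_eq_map, List.map_cons, List.map_map]
      congr 1
      apply List.map_congr_left
      intro t ht
      simp only [Function.comp_apply]
      omega
    rw [hX, hY]
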